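/- For every x ∈ ℝⁿ, ‖P_Cᵀ x‖² = Σ_{i=r+1}^{r+s} (Z̃_iᵀ x)²/(1−σ_i²) + Σ_{i=r+s+1}^{p} (Z̃_iᵀ x)²; in particular, ‖P_Cᵀ x‖ ≥ ‖Z̃_{(r+1):p}ᵀ x‖. -/

import Mathlib

open Matrix

noncomputable def specNorm {m n : Type*} [Fintype m] [Fintype n] [DecidableEq n]
    (A : Matrix m n ℝ) : ℝ :=
  ‖LinearMap.toContinuousLinearMap (Matrix.toEuclideanLin A)‖

noncomputable def vnorm {n : Type*} [Fintype n] (v : n → ℝ) : ℝ :=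
  Real.sqrt (∑ i, v i ^ 2)

lemma sum_fin_dite {m : ℕ} (a : ℕ) (c : Fin m → ℝ) :
    (∑ k : Fin m, if a = (k:ℕ) then c k else 0) = if h : a < m then c ⟨a,h⟩ else 0 := by
  split_ifs with h
  · rw [Finset.sum_eq_single ⟨a,h⟩]
    · simp
    · intro k _ hk
      rw [if_neg]
      intro he; exact hk (by ext; simp [← he])
    · simp
  · apply Finset.sum_eq_zero; intro k _
    rw [if_neg]; intro he; exact h (he ▸ k.2)

lemma sum_fin_mul_ite {m : ℕ} (a b : ℕ) (c d : Fin m → ℝ) :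
    (∑ k : Fin m, (if a = (k:ℕ) then c k else 0) * (if (k:ℕ) = b then d k else 0))
    = if h : a < m then (if a = b then c ⟨a,h⟩ * d ⟨a,h⟩ else 0) else 0 := by
  rw [← sum_fin_dite a (fun k => if (k:ℕ) = b then c k * d k else 0)]
  · apply Finset.sum_congr rfl
    intro k _
    by_cases h1 : a = (k:ℕ) <;> by_cases h2 : (k:ℕ) = b <;>
      simp [h1, h2]

theorem stmt_4
    (n p K r s : ℕ) (hs : 1 ≤ s) (hrp : r + s ≤ p) (hrK : r + s ≤ K)
    (hpn : p ≤ n) (hKn : K ≤ n)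
    (Z : Matrix (Fin n) (Fin p) ℝ) (W : Matrix (Fin n) (Fin K) ℝ)
    (hZ : Zᵀ * Z = 1) (hW : Wᵀ * W = 1)
    (U : Matrix (Fin p) (Fin p) ℝ) (V : Matrix (Fin K) (Fin K) ℝ)
    (hU : Uᵀ * U = 1) (hV : Vᵀ * V = 1)
    (σ : ℕ → ℝ)
    (hσone : ∀ i, i < r → σ i = 1)
    (hσlt : σ r < 1)
    (hσanti : ∀ i j, i ≤ j → σ j ≤ σ i)
    (hσpos : 0 < σ (r + s - 1))
    (hσzero : ∀ i, r + s ≤ i → σ i = 0)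
    (hSVD : Zᵀ * W
      = U * (Matrix.of fun (i : Fin p) (j : Fin K) =>
          if (i : ℕ) = (j : ℕ) then σ (i : ℕ) else 0) * Vᵀ)
    (Zt : Matrix (Fin n) (Fin p) ℝ) (hZt : Zt = Z * U)
    (Wt : Matrix (Fin n) (Fin K) ℝ) (hWt : Wt = W * V)
    (M : Matrix (Fin n) (Fin (p - r) ⊕ Fin (K - r)) ℝ)
    (hMl : ∀ (a : Fin n) (j : Fin (p - r)),
      M a (Sum.inl j) = Zt a ⟨r + j.1, by have := j.2; omega⟩)
    (hMr : ∀ (a : Fin n) (j : Fin (K - r)),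
      M a (Sum.inr j) = Wt a ⟨r + j.1, by have := j.2; omega⟩)
    (PR PC PN : Matrix (Fin n) (Fin n) ℝ)
    (hPR : PR = ∑ i ∈ (Finset.range r).attach,
      Matrix.vecMulVec
        (fun a : Fin n => Zt a ⟨i.1, by have := Finset.mem_range.mp i.2; omega⟩)
        (fun a : Fin n => Zt a ⟨i.1, by have := Finset.mem_range.mp i.2; omega⟩))
    (hPC : PC = (Matrix.of fun (a : Fin n) (j : Fin (p - r) ⊕ Fin (K - r)) =>
        Sum.elim (fun j' : Fin (p - r) => Zt a ⟨r + j'.1, by have := j'.2; omega⟩)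
                 (fun _ : Fin (K - r) => (0 : ℝ)) j) * (Mᵀ * M)⁻¹ * Mᵀ)
    (hPN : PN = (Matrix.of fun (a : Fin n) (j : Fin (p - r) ⊕ Fin (K - r)) =>
        Sum.elim (fun _ : Fin (p - r) => (0 : ℝ))
                 (fun j' : Fin (K - r) => Wt a ⟨r + j'.1, by have := j'.2; omega⟩) j)
        * (Mᵀ * M)⁻¹ * Mᵀ)
    :
    ∀ x : Fin n → ℝ,
      vnorm (PCᵀ.mulVec x) ^ 2
        = (∑ i ∈ (Finset.Ico r (r + s)).attach,
            ((fun a : Fin n => Zt a ⟨i.1, by have := (Finset.mem_Ico.mp i.2).2; omega⟩) ⬝ᵥ x) ^ 2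
              / (1 - σ i.1 ^ 2))
          + ∑ i ∈ (Finset.Ico (r + s) p).attach,
              ((fun a : Fin n => Zt a ⟨i.1, (Finset.mem_Ico.mp i.2).2⟩) ⬝ᵥ x) ^ 2
      ∧ Real.sqrt (∑ i ∈ (Finset.Ico r p).attach,
            ((fun a : Fin n => Zt a ⟨i.1, (Finset.mem_Ico.mp i.2).2⟩) ⬝ᵥ x) ^ 2)
          ≤ vnorm (PCᵀ.mulVec x) := by
  -- basic facts about σ
  have hσnn : ∀ i, r ≤ i → 0 ≤ σ i := by
    intro i hi
    rcases le_or_gt (r+s) i with h|h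
    · rw [hσzero i h]
    · exact le_of_lt (lt_of_lt_of_le hσpos (hσanti _ _ (by omega)))
  have hσlt1 : ∀ i, r ≤ i → σ i < 1 := fun i hi => lt_of_le_of_lt (hσanti r i hi) hσlt
  have hposd : ∀ i, r ≤ i → 0 < 1 - σ i ^ 2 := by
    intro i hi
    have h0 := hσnn i hi; have h1 := hσlt1 i hi
    nlinarith
  have hne : ∀ i, r ≤ i → (1 - σ i ^ 2) ≠ 0 := fun i hi => ne_of_gt (hposd i hi)
  -- orthonormality of Zt, Wt
  have hZtZt : Ztᵀ * Zt = 1 := by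
    rw [hZt, Matrix.transpose_mul, Matrix.mul_assoc, ← Matrix.mul_assoc Zᵀ, hZ,
      Matrix.one_mul, hU]
  have hWtWt : Wtᵀ * Wt = 1 := by
    rw [hWt, Matrix.transpose_mul, Matrix.mul_assoc, ← Matrix.mul_assoc Wᵀ, hW,
      Matrix.one_mul, hV]
  have hZtWt : Ztᵀ * Wt = Matrix.of fun (i : Fin p) (j : Fin K) =>
      if (i : ℕ) = (j : ℕ) then σ (i : ℕ) else 0 := by
    rw [hZt, hWt]
    calc (Z*U)ᵀ * (W * V) = Uᵀ * (Zᵀ * W) * V := by rw [Matrix.transpose_mul]; simp only [Matrix.mul_assoc]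
    _ = (Uᵀ * U) * (Matrix.of fun (i : Fin p) (j : Fin K) =>
          if (i : ℕ) = (j : ℕ) then σ (i : ℕ) else 0) * (Vᵀ * V) := by
          rw [hSVD]; simp only [Matrix.mul_assoc]
    _ = _ := by rw [hU, hV, Matrix.one_mul, Matrix.mul_one]
  have key1 : ∀ i j : Fin p, (∑ a, Zt a i * Zt a j) = if (i:ℕ) = (j:ℕ) then 1 else 0 := by
    intro i j
    have := congrFun (congrFun hZtZt i) j
    simpa [Matrix.mul_apply, Matrix.transpose_apply, Matrix.one_apply, Fin.ext_iff] using this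
  have key2 : ∀ i j : Fin K, (∑ a, Wt a i * Wt a j) = if (i:ℕ) = (j:ℕ) then 1 else 0 := by
    intro i j
    have := congrFun (congrFun hWtWt i) j
    simpa [Matrix.mul_apply, Matrix.transpose_apply, Matrix.one_apply, Fin.ext_iff] using this
  have key3 : ∀ (i : Fin p) (j : Fin K), (∑ a, Zt a i * Wt a j)
      = if (i:ℕ) = (j:ℕ) then σ (i:ℕ) else 0 := by
    intro i j
    have := congrFun (congrFun hZtWt i) j
    simpa [Matrix.mul_apply, Matrix.transpose_apply] using this
  -- the explicit form of Mᵀ * M and its inverse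
  obtain ⟨B, hB⟩ : ∃ B' : Matrix (Fin (p-r) ⊕ Fin (K-r)) (Fin (p-r) ⊕ Fin (K-r)) ℝ,
      B' = Matrix.of (fun a b =>
        Sum.elim (fun i : Fin (p-r) => Sum.elim
            (fun j : Fin (p-r) => if (i:ℕ) = (j:ℕ) then (1:ℝ) else 0)
            (fun j : Fin (K-r) => if (i:ℕ) = (j:ℕ) then σ (r+(i:ℕ)) else 0) b)
          (fun i : Fin (K-r) => Sum.elim
            (fun j : Fin (p-r) => if (i:ℕ) = (j:ℕ) then σ (r+(j:ℕ)) else 0)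
            (fun j : Fin (K-r) => if (i:ℕ) = (j:ℕ) then (1:ℝ) else 0) b) a) := ⟨_, rfl⟩
  obtain ⟨N, hN⟩ : ∃ N' : Matrix (Fin (p-r) ⊕ Fin (K-r)) (Fin (p-r) ⊕ Fin (K-r)) ℝ,
      N' = Matrix.of (fun a b =>
        Sum.elim (fun i : Fin (p-r) => Sum.elim
            (fun j : Fin (p-r) => if (i:ℕ) = (j:ℕ) then 1/(1-σ (r+(i:ℕ))^2) else 0)
            (fun j : Fin (K-r) => if (i:ℕ) = (j:ℕ) then -σ (r+(i:ℕ))/(1-σ (r+(i:ℕ))^2) else 0) b)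
          (fun i : Fin (K-r) => Sum.elim
            (fun j : Fin (p-r) => if (i:ℕ) = (j:ℕ) then -σ (r+(i:ℕ))/(1-σ (r+(i:ℕ))^2) else 0)
            (fun j : Fin (K-r) => if (i:ℕ) = (j:ℕ) then 1/(1-σ (r+(i:ℕ))^2) else 0) b) a) := ⟨_, rfl⟩
  have hMM : Mᵀ * M = B := by
    ext a b
    rcases a with i|i <;> rcases b with j|j <;>
      simp only [Matrix.mul_apply, Matrix.transpose_apply, hMl, hMr, hB, Matrix.of_apply,
        Sum.elim_inl, Sum.elim_inr]
    · rw [key1]; simp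
    · rw [key3]; simp
    · have h := key3 ⟨r + (j:ℕ), by have := j.2; omega⟩ ⟨r + (i:ℕ), by have := i.2; omega⟩
      rw [Finset.sum_congr rfl (fun a _ => mul_comm (Wt a _) (Zt a _)), h]
      by_cases hij : (i:ℕ) = (j:ℕ)
      · simp [hij]
      · rw [if_neg (by simp; omega), if_neg hij]
    · rw [key2]; simp
  have hsp : s ≤ p - r := by omega
  have hsK : s ≤ K - r := by omega
  have hBN : B * N = 1 := by
    ext a b
    rcases a with i|i <;> rcases b with j|j <;>
      simp only [hB, hN, Matrix.mul_apply, Fintype.sum_sum_type, Matrix.of_apply,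
        Sum.elim_inl, Sum.elim_inr, Matrix.one_apply, sum_fin_mul_ite,
        Sum.inl.injEq, Sum.inr.injEq, Fin.ext_iff, Fin.val_mk,
        reduceCtorEq, if_false]
    · rw [dif_pos i.2]
      by_cases hij : (i:ℕ) = (j:ℕ)
      · by_cases h2 : (i:ℕ) < K - r
        · rw [dif_pos h2]
          simp only [if_pos hij]
          have hd := hne (r+(i:ℕ)) (by omega)
          field_simp
          ring
        · rw [dif_neg h2]
          have hz : σ (r+(i:ℕ)) = 0 := hσzero _ (by omega)
          simp only [if_pos hij, hz]
          norm_num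
      · simp [hij]
    · rw [dif_pos i.2]
      by_cases hij : (i:ℕ) = (j:ℕ)
      · rw [dif_pos (show (i:ℕ) < K - r by omega)]
        simp only [if_pos hij]
        ring
      · simp [hij]
    · rw [dif_pos i.2]
      by_cases hij : (i:ℕ) = (j:ℕ)
      · rw [dif_pos (show (i:ℕ) < p - r by omega)]
        simp only [if_pos hij]
        ring
      · simp [hij]
    · rw [dif_pos i.2]
      by_cases hij : (i:ℕ) = (j:ℕ)
      · by_cases h2 : (i:ℕ) < p - r
        · rw [dif_pos h2]
          simp only [if_pos hij]
          have hd := hne (r+(i:ℕ)) (by omega)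
          field_simp
          ring
        · rw [dif_neg h2]
          have hz : σ (r+(i:ℕ)) = 0 := hσzero _ (by omega)
          simp only [if_pos hij, hz]
          norm_num
      · simp [hij]
  have hinv : (Mᵀ * M)⁻¹ = N := by
    rw [hMM]; exact Matrix.inv_eq_right_inv hBN
  have hNB : N * B = 1 := mul_eq_one_comm.mp hBN
  have hNsym : Nᵀ = N := by
    ext a b
    rcases a with i|i <;> rcases b with j|j <;>
      simp only [hN, Matrix.transpose_apply, Matrix.of_apply, Sum.elim_inl, Sum.elim_inr] <;>
      [skip; skip; skip; skip] <;>
      (by_cases hij : (j:ℕ) = (i:ℕ) <;> simp [hij, Ne.symm, eq_comm])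
  intro x
  obtain ⟨A, hA⟩ : ∃ A' : Matrix (Fin n) (Fin (p-r) ⊕ Fin (K-r)) ℝ,
      A' = Matrix.of (fun (a : Fin n) (j : Fin (p - r) ⊕ Fin (K - r)) =>
        Sum.elim (fun j' : Fin (p - r) => Zt a ⟨r + j'.1, by have := j'.2; omega⟩)
                 (fun _ : Fin (K - r) => (0 : ℝ)) j) := ⟨_, rfl⟩
  have hPC' : PC = A * N * Mᵀ := by rw [hPC, hinv, ← hA]
  set y : Fin (p-r) ⊕ Fin (K-r) → ℝ := Aᵀ.mulVec x with hy
  have hyinl : ∀ j : Fin (p-r),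
      y (Sum.inl j) = (fun a : Fin n => Zt a ⟨r + j.1, by have := j.2; omega⟩) ⬝ᵥ x := by
    intro j
    simp [hy, Matrix.mulVec, hA, Matrix.transpose_apply, dotProduct]
  have hyinr : ∀ j : Fin (K-r), y (Sum.inr j) = 0 := by
    intro j
    simp [hy, Matrix.mulVec, hA, Matrix.transpose_apply, dotProduct]
  have hsq : (∑ a, (PCᵀ.mulVec x a)^2) = y ⬝ᵥ (N.mulVec y) := by
    have h1 : (∑ a, ((PCᵀ.mulVec x) a)^2) = (PCᵀ.mulVec x) ⬝ᵥ (PCᵀ.mulVec x) := by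
      simp [dotProduct, sq]
    rw [h1, hPC']
    have ht : (A * N * Mᵀ)ᵀ = M * (N * Aᵀ) := by
      rw [Matrix.transpose_mul, Matrix.transpose_mul, Matrix.transpose_transpose, hNsym]
    rw [ht, ← Matrix.mulVec_mulVec, ← Matrix.mulVec_mulVec, Matrix.dotProduct_mulVec,
      ← Matrix.mulVec_transpose]
    simp only [Matrix.mulVec_mulVec]
    rw [← Matrix.mul_assoc, hMM, ← Matrix.mul_assoc, hBN, Matrix.one_mul,
      ← Matrix.mulVec_mulVec, hy]
  have hmain : y ⬝ᵥ (N.mulVec y)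
      = ∑ i : Fin (p-r), (1/(1-σ (r+(i:ℕ))^2)) * (y (Sum.inl i))^2 := by
    simp only [dotProduct, Matrix.mulVec, Fintype.sum_sum_type, hN, Matrix.of_apply,
      Sum.elim_inl, Sum.elim_inr, hyinr, mul_zero, zero_mul, Finset.sum_const_zero, add_zero,
      ite_mul, sum_fin_dite]
    apply Finset.sum_congr rfl
    intro i _
    rw [dif_pos i.2]
    simp only [Fin.eta]
    ring
  obtain ⟨g, hg⟩ : ∃ g' : ℕ → ℝ, g' = fun m =>
      if h : m < p then (1/(1-σ m^2)) * ((fun a : Fin n => Zt a ⟨m,h⟩) ⬝ᵥ x)^2 else 0 := ⟨_, rfl⟩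
  have hIco : (∑ i : Fin (p-r), (1/(1-σ (r+(i:ℕ))^2)) * (y (Sum.inl i))^2)
      = ∑ m ∈ Finset.Ico r p, g m := by
    rw [Finset.sum_Ico_eq_sum_range]
    rw [← Fin.sum_univ_eq_sum_range (fun j => g (r + j)) (p - r)]
    apply Finset.sum_congr rfl
    intro i _
    rw [hyinl]
    simp only [hg]
    rw [dif_pos (show r + (i:ℕ) < p by have := i.2; omega)]
  have hnn : 0 ≤ ∑ a, (PCᵀ.mulVec x a)^2 := Finset.sum_nonneg (fun a _ => sq_nonneg _)
  have hv2 : vnorm (PCᵀ.mulVec x) ^ 2 = ∑ m ∈ Finset.Ico r p, g m := by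
    simp only [vnorm]
    rw [Real.sq_sqrt hnn, hsq, hmain, hIco]
  constructor
  · rw [hv2, ← Finset.sum_Ico_consecutive g (show r ≤ r + s by omega) (show r + s ≤ p by omega)]
    congr 1
    · rw [← Finset.sum_attach (Finset.Ico r (r+s)) g]
      apply Finset.sum_congr rfl
      intro i _
      have hm := Finset.mem_Ico.mp i.2
      simp only [hg]
      rw [dif_pos (show (i:ℕ) < p by omega), one_div_mul_eq_div]
    · rw [← Finset.sum_attach (Finset.Ico (r+s) p) g]
      apply Finset.sum_congr rfl
      intro i _
      have hm := Finset.mem_Ico.mp i.2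
      simp only [hg]
      rw [dif_pos (show (i:ℕ) < p by omega), hσzero _ (by omega)]
      norm_num
  · obtain ⟨f0, hf0⟩ : ∃ f' : ℕ → ℝ, f' = fun m =>
        if h : m < p then ((fun a : Fin n => Zt a ⟨m,h⟩) ⬝ᵥ x)^2 else 0 := ⟨_, rfl⟩
    have hvn : vnorm (PCᵀ.mulVec x) = Real.sqrt (∑ m ∈ Finset.Ico r p, g m) := by
      simp only [vnorm]
      rw [hsq, hmain, hIco]
    rw [hvn]
    have h1 : (∑ i ∈ (Finset.Ico r p).attach,
          ((fun a : Fin n => Zt a ⟨i.1, (Finset.mem_Ico.mp i.2).2⟩) ⬝ᵥ x) ^ 2)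
        = ∑ m ∈ Finset.Ico r p, f0 m := by
      rw [← Finset.sum_attach (Finset.Ico r p) f0]
      apply Finset.sum_congr rfl
      intro i _
      simp only [hf0]
      rw [dif_pos (Finset.mem_Ico.mp i.2).2]
    rw [h1]
    apply Real.sqrt_le_sqrt
    apply Finset.sum_le_sum
    intro m hm
    have hm' := Finset.mem_Ico.mp hm
    simp only [hf0, hg]
    rw [dif_pos hm'.2, dif_pos hm'.2]
    have h2 := hposd m (by omega)
    have h3 : (1:ℝ) ≤ 1/(1 - σ m^2) :=
      one_le_one_div h2 (by linarith [sq_nonneg (σ m)])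
    exact le_mul_of_one_le_left (sq_nonneg _) h3
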